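/- Let φ₁, φ₂ : ℝ → ℝ be twice differentiable with φ₁(x) > 0 and φ₂(x) > 0 for all x, let θ ∈ [0,1], and define f = φ₁^θ · φ₂^(1-θ). Then f is twice differentiable, f > 0, and for every x, f''(x)/f(x) ≤ θ · φ₁''(x)/φ₁(x) + (1-θ) · φ₂''(x)/φ₂(x). -/

import Mathlib

theorem stmt_6 (φ₁ φ₂ : ℝ → ℝ) (θ : ℝ)
    (h1 : ∀ x, DifferentiableAt ℝ φ₁ x) (h1' : ∀ x, DifferentiableAt ℝ (deriv φ₁) x)
    (h2 : ∀ x, DifferentiableAt ℝ φ₂ x) (h2' : ∀ x, DifferentiableAt ℝ (deriv φ₂) x)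
    (hp1 : ∀ x, 0 < φ₁ x) (hp2 : ∀ x, 0 < φ₂ x)
    (hθ0 : 0 ≤ θ) (hθ1 : θ ≤ 1)
    (f : ℝ → ℝ) (hf : ∀ x, f x = (φ₁ x) ^ θ * (φ₂ x) ^ (1 - θ)) :
    (∀ x, DifferentiableAt ℝ f x) ∧ (∀ x, DifferentiableAt ℝ (deriv f) x) ∧
    (∀ x, 0 < f x) ∧
    (∀ x, deriv (deriv f) x / f x
      ≤ θ * (deriv (deriv φ₁) x / φ₁ x) + (1 - θ) * (deriv (deriv φ₂) x / φ₂ x)) := by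
  have hfe : f = fun x => (φ₁ x) ^ θ * (φ₂ x) ^ (1 - θ) := funext hf
  subst hfe
  have hn1 : ∀ x, φ₁ x ≠ 0 := fun x => (hp1 x).ne'
  have hn2 : ∀ x, φ₂ x ≠ 0 := fun x => (hp2 x).ne'
  have hfpos : ∀ x, 0 < (φ₁ x) ^ θ * (φ₂ x) ^ (1 - θ) := fun x =>
    mul_pos (Real.rpow_pos_of_pos (hp1 x) θ) (Real.rpow_pos_of_pos (hp2 x) _)
  set G : ℝ → ℝ := fun x => θ * (deriv φ₁ x / φ₁ x) + (1 - θ) * (deriv φ₂ x / φ₂ x) with hGdef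
  have hF : ∀ x, HasDerivAt (fun x => (φ₁ x) ^ θ * (φ₂ x) ^ (1 - θ))
      (((φ₁ x) ^ θ * (φ₂ x) ^ (1 - θ)) * G x) x := by
    intro x
    have hA := ((h1 x).hasDerivAt).rpow_const (p := θ) (Or.inl (hn1 x))
    have hB := ((h2 x).hasDerivAt).rpow_const (p := 1 - θ) (Or.inl (hn2 x))
    have hAB := hA.mul hB
    refine hAB.congr_deriv ?_
    rw [Real.rpow_sub_one (hn1 x), Real.rpow_sub_one (hn2 x)]
    simp only [hGdef]
    field_simp
  have hderiv : deriv (fun x => (φ₁ x) ^ θ * (φ₂ x) ^ (1 - θ))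
      = fun x => ((φ₁ x) ^ θ * (φ₂ x) ^ (1 - θ)) * G x := funext fun x => (hF x).deriv
  have hGd : ∀ x, HasDerivAt G
      (θ * ((deriv (deriv φ₁) x * φ₁ x - deriv φ₁ x * deriv φ₁ x) / (φ₁ x) ^ 2)
       + (1 - θ) * ((deriv (deriv φ₂) x * φ₂ x - deriv φ₂ x * deriv φ₂ x) / (φ₂ x) ^ 2)) x := by
    intro x
    exact ((((h1' x).hasDerivAt).div ((h1 x).hasDerivAt) (hn1 x)).const_mul θ).add
      ((((h2' x).hasDerivAt).div ((h2 x).hasDerivAt) (hn2 x)).const_mul (1 - θ))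
  have hF2 : ∀ x, HasDerivAt (deriv (fun x => (φ₁ x) ^ θ * (φ₂ x) ^ (1 - θ)))
      ((((φ₁ x) ^ θ * (φ₂ x) ^ (1 - θ)) * G x) * G x
        + ((φ₁ x) ^ θ * (φ₂ x) ^ (1 - θ)) *
          (θ * ((deriv (deriv φ₁) x * φ₁ x - deriv φ₁ x * deriv φ₁ x) / (φ₁ x) ^ 2)
           + (1 - θ) * ((deriv (deriv φ₂) x * φ₂ x - deriv φ₂ x * deriv φ₂ x) / (φ₂ x) ^ 2))) x := by
    rw [hderiv]
    exact fun x => (hF x).mul (hGd x)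
  refine ⟨fun x => (hF x).differentiableAt, fun x => (hF2 x).differentiableAt, hfpos, ?_⟩
  intro x
  rw [(hF2 x).deriv]
  set F := (φ₁ x) ^ θ * (φ₂ x) ^ (1 - θ) with hFdef
  have hFpos := hfpos x
  set u := deriv φ₁ x / φ₁ x with hu
  set v := deriv φ₂ x / φ₂ x with hv
  have e1 : (deriv (deriv φ₁) x * φ₁ x - deriv φ₁ x * deriv φ₁ x) / (φ₁ x) ^ 2
      = deriv (deriv φ₁) x / φ₁ x - u ^ 2 := by
    rw [hu]; field_simp [hn1 x]
  have e2 : (deriv (deriv φ₂) x * φ₂ x - deriv φ₂ x * deriv φ₂ x) / (φ₂ x) ^ 2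
      = deriv (deriv φ₂) x / φ₂ x - v ^ 2 := by
    rw [hv]; field_simp [hn2 x]
  have hGx : G x = θ * u + (1 - θ) * v := rfl
  rw [e1, e2, hGx]
  have key : (F * (θ * u + (1 - θ) * v) * (θ * u + (1 - θ) * v)
      + F * (θ * (deriv (deriv φ₁) x / φ₁ x - u ^ 2)
        + (1 - θ) * (deriv (deriv φ₂) x / φ₂ x - v ^ 2))) / F
      = (θ * u + (1 - θ) * v) ^ 2
        + (θ * (deriv (deriv φ₁) x / φ₁ x - u ^ 2)
          + (1 - θ) * (deriv (deriv φ₂) x / φ₂ x - v ^ 2)) := by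
    field_simp [show F ≠ 0 from hFpos.ne']
  rw [key]
  nlinarith [sq_nonneg (u - v), mul_nonneg hθ0 (sub_nonneg.2 hθ1),
    mul_nonneg (mul_nonneg hθ0 (sub_nonneg.2 hθ1)) (sq_nonneg (u - v))]
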